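/- Let ∅ ≠ G ⊊ ℝⁿ be an open set and let f ∈ C_c(G) be a continuous function with compact support in G. Then the local Hardy–Littlewood maximal function M_G f is continuous on G. -/

import Mathlib

open MeasureTheory Metric
open scoped ENNReal

section Aux

variable {n : ℕ}
local notation "E𝕟" => EuclideanSpace ℝ (Fin n)

/-- Change of variables: the average of `g` over `ball x r` equals the average of
`g (x + r • ·)` over the unit ball. -/
lemma average_ball_eq_aux (g : E𝕟 → ℝ) (x : E𝕟) {r : ℝ} (hr : 0 < r) :
    ⨍ y in ball x r, g y = ⨍ y in ball (0 : E𝕟) 1, g (x + r • y) := by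
  have h1 : ∫ y in ball x r, g y = ∫ z in ball (0 : E𝕟) r, g (x + z) := by
    have h := (measurePreserving_add_left (volume : Measure E𝕟) x).setIntegral_preimage_emb
      (MeasurableEquiv.addLeft x).measurableEmbedding g (ball x r)
    rw [← h]
    congr 1
    rw [preimage_add_ball, sub_self]
  have h2 : ∫ z in ball (0 : E𝕟) 1, g (x + r • z)
      = (r ^ n)⁻¹ • ∫ z in ball (0 : E𝕟) r, g (x + z) := by
    have h := Measure.setIntegral_comp_smul_of_pos (volume : Measure E𝕟)
      (fun z => g (x + z)) (ball (0 : E𝕟) 1) hr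
    rw [smul_unitBall_of_pos hr, finrank_euclideanSpace_fin] at h
    exact h
  have h3 : (volume (ball x r)).toReal
      = r ^ n * (volume (ball (0 : E𝕟) 1)).toReal := by
    rw [Measure.addHaar_ball_of_pos _ x hr, finrank_euclideanSpace_fin, ENNReal.toReal_mul,
      ENNReal.toReal_ofReal (by positivity)]
  have hrn : (r : ℝ) ^ n ≠ 0 := by positivity
  rw [setAverage_eq, setAverage_eq, h1, h2, measureReal_def, measureReal_def, h3, smul_eq_mul, smul_eq_mul, smul_eq_mul]
  rw [mul_inv]
  ring

/-- Joint continuity of `(x, r) ↦ ⨍_{B(0,1)} |f (x + r y)| dy`. -/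
lemma continuous_avg_aux (f : E𝕟 → ℝ) (hf : Continuous f) (hsupp : HasCompactSupport f) :
    Continuous (fun p : E𝕟 × ℝ => ⨍ y in ball (0 : E𝕟) 1, |f (p.1 + p.2 • y)|) := by
  obtain ⟨C, hC⟩ := hsupp.exists_bound_of_continuous hf
  haveI : IsFiniteMeasure ((volume : Measure E𝕟).restrict (ball (0 : E𝕟) 1)) :=
    ⟨by rw [Measure.restrict_apply_univ]; exact measure_ball_lt_top⟩
  have key : Continuous (fun p : E𝕟 × ℝ => ∫ y in ball (0 : E𝕟) 1, |f (p.1 + p.2 • y)|) := by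
    apply continuous_of_dominated (bound := fun _ => C)
    · intro p
      exact ((hf.comp (continuous_const.add
        (continuous_const_smul p.2))).abs).aestronglyMeasurable
    · intro p
      filter_upwards with y
      have := hC (p.1 + p.2 • y)
      rw [Real.norm_eq_abs] at this ⊢
      rwa [abs_abs]
    · exact integrable_const (μ := (volume : Measure E𝕟).restrict (ball (0 : E𝕟) 1)) C
    · filter_upwards with y
      exact (hf.comp (continuous_fst.add (continuous_snd.smul continuous_const))).abs
  simp only [setAverage_eq]
  exact key.const_smul (volume.real (ball (0 : E𝕟) 1))⁻¹

end Aux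

/-- The local Hardy–Littlewood maximal function
`M_G f(x) = sup_{0 < r < dist(x,∂G)} ⨍_{B(x,r)} |f|`. -/
noncomputable def localMax {n : ℕ} (G : Set (EuclideanSpace ℝ (Fin n)))
    (f : EuclideanSpace ℝ (Fin n) → ℝ) (x : EuclideanSpace ℝ (Fin n)) : ℝ :=
  ⨆ r : {r : ℝ // 0 < r ∧ r < Metric.infDist x (frontier G)},
    ⨍ y in Metric.ball x (r : ℝ), |f y|

/-- **Lemma 2.1.** Let `∅ ≠ G ⊊ ℝⁿ` be an open set and `f ∈ C_c(G)`. Then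
`M_G f` is continuous on `G`. -/
theorem localMax_continuousOn (n : ℕ) (G : Set (EuclideanSpace ℝ (Fin n)))
    (hG : IsOpen G) (hne : G.Nonempty) (hGuniv : G ≠ Set.univ)
    (f : EuclideanSpace ℝ (Fin n) → ℝ) (hf : Continuous f)
    (hsupp : HasCompactSupport f) (hsuppG : tsupport f ⊆ G) :
    ContinuousOn (localMax G f) G := by
  -- the frontier of `G` is nonempty
  have hfr : (frontier G).Nonempty := by
    rw [Set.nonempty_iff_ne_empty]
    intro h
    have hclopen : IsClopen G := isClopen_iff_frontier_eq_empty.mpr h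
    rcases isClopen_iff.mp hclopen with rfl | rfl
    · exact hne.ne_empty rfl
    · exact hGuniv rfl
  set d : EuclideanSpace ℝ (Fin n) → ℝ := fun x => infDist x (frontier G) with hdd
  have hdc : Continuous d := continuous_infDist_pt _
  have hdpos : ∀ x ∈ G, 0 < d x := by
    intro x hx
    refine (IsClosed.notMem_iff_infDist_pos isClosed_frontier hfr).mp ?_
    intro hmem
    rw [hG.frontier_eq] at hmem
    exact hmem.2 hx
  set A : EuclideanSpace ℝ (Fin n) × ℝ → ℝ :=
    fun p => ⨍ y in ball (0 : EuclideanSpace ℝ (Fin n)) 1, |f (p.1 + p.2 • y)| with hAdef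
  have hAc : Continuous A := continuous_avg_aux f hf hsupp
  have hA0 : ∀ p, 0 ≤ A p := by
    intro p
    rw [hAdef]
    simp only [setAverage_eq, smul_eq_mul]
    have : 0 ≤ ∫ y in ball (0 : EuclideanSpace ℝ (Fin n)) 1, |f (p.1 + p.2 • y)| :=
      integral_nonneg fun y => abs_nonneg _
    positivity
  haveI : CompactSpace (Set.Icc (0:ℝ) 1) := isCompact_iff_compactSpace.mp isCompact_Icc
  haveI : Nonempty (Set.Icc (0:ℝ) 1) := ⟨⟨0, by norm_num⟩⟩
  have hhc : Continuous (fun p : EuclideanSpace ℝ (Fin n) × ℝ => A (p.1, p.2 * d p.1)) :=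
    hAc.comp (continuous_fst.prodMk (continuous_snd.mul (hdc.comp continuous_fst)))
  let Φ : C(EuclideanSpace ℝ (Fin n), C(Set.Icc (0:ℝ) 1, ℝ)) :=
    ContinuousMap.curry ⟨fun p : EuclideanSpace ℝ (Fin n) × Set.Icc (0:ℝ) 1 =>
      A (p.1, (p.2 : ℝ) * d p.1),
      hhc.comp (continuous_fst.prodMk (continuous_subtype_val.comp continuous_snd))⟩
  refine ContinuousOn.congr ((continuous_norm.comp Φ.continuous).continuousOn) ?_
  intro x hx
  have hdx : 0 < d x := hdpos x hx
  have hgc : Continuous (fun r : ℝ => A (x, r)) := hAc.comp (Continuous.prodMk_right x)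
  -- Step 1: unfold localMax as sSup of image over Ioo
  have step1 : localMax G f x
      = sSup ((fun r => ⨍ y in ball x r, |f y|) '' Set.Ioo 0 (d x)) :=
    (sSup_image' (s := Set.Ioo 0 (d x)) (f := fun r => ⨍ y in ball x r, |f y|)).symm
  -- Step 2: rewrite averages via change of variables
  have step2 : (fun r => ⨍ y in ball x r, |f y|) '' Set.Ioo 0 (d x)
      = (fun r => A (x, r)) '' Set.Ioo 0 (d x) := by
    apply Set.image_congr
    intro r hr
    exact average_ball_eq_aux (fun y => |f y|) x hr.1
  -- boundedness facts
  have hbddIcc : BddAbove ((fun r => A (x, r)) '' Set.Icc 0 (d x)) :=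
    (isCompact_Icc.image hgc).bddAbove
  have hsub : (fun r => A (x, r)) '' Set.Ioo 0 (d x)
      ⊆ (fun r => A (x, r)) '' Set.Icc 0 (d x) :=
    Set.image_mono Set.Ioo_subset_Icc_self
  have hbddIoo : BddAbove ((fun r => A (x, r)) '' Set.Ioo 0 (d x)) := hbddIcc.mono hsub
  have hneIoo : ((fun r => A (x, r)) '' Set.Ioo 0 (d x)).Nonempty :=
    (Set.nonempty_Ioo.mpr hdx).image _
  -- Step 3: sSup over Ioo equals sSup over Icc
  have step3 : sSup ((fun r => A (x, r)) '' Set.Ioo 0 (d x))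
      = sSup ((fun r => A (x, r)) '' Set.Icc 0 (d x)) := by
    refine le_antisymm (csSup_le_csSup hbddIcc hneIoo hsub) ?_
    refine csSup_le ((Set.nonempty_Icc.mpr hdx.le).image _) ?_
    rintro a ⟨r, hr, rfl⟩
    have hrcl : r ∈ closure (Set.Ioo 0 (d x)) := by
      rw [closure_Ioo hdx.ne]; exact hr
    have hmem : (fun r => A (x, r)) r
        ∈ closure ((fun r => A (x, r)) '' Set.Ioo 0 (d x)) :=
      image_closure_subset_closure_image hgc ⟨r, hrcl, rfl⟩
    have hsubset : closure ((fun r => A (x, r)) '' Set.Ioo 0 (d x))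
        ⊆ Set.Iic (sSup ((fun r => A (x, r)) '' Set.Ioo 0 (d x))) :=
      closure_minimal (fun a ha => le_csSup hbddIoo ha) isClosed_Iic
    exact hsubset hmem
  -- Step 4: reparametrize Icc 0 (d x) by Icc 0 1
  have himg : (fun t : ℝ => t * d x) '' Set.Icc 0 1 = Set.Icc 0 (d x) := by
    rw [Set.image_mul_right_Icc (by norm_num) hdx.le]
    simp
  have step4 : (fun r => A (x, r)) '' Set.Icc 0 (d x)
      = (fun t : ℝ => A (x, t * d x)) '' Set.Icc 0 1 := by
    rw [← himg, ← Set.image_comp]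
    rfl
  -- Step 5: identify with the norm of Φ x
  have step5 : sSup ((fun t : ℝ => A (x, t * d x)) '' Set.Icc 0 1) = ‖Φ x‖ := by
    rw [ContinuousMap.norm_eq_iSup_norm]
    have heq : ∀ t : Set.Icc (0:ℝ) 1, ‖(Φ x) t‖ = A (x, (t : ℝ) * d x) := by
      intro t
      have : (Φ x) t = A (x, (t : ℝ) * d x) := rfl
      rw [this, Real.norm_eq_abs, abs_of_nonneg (hA0 _)]
    rw [show (fun t : Set.Icc (0:ℝ) 1 => ‖(Φ x) t‖)
        = fun t : Set.Icc (0:ℝ) 1 => A (x, (t : ℝ) * d x) from funext heq]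
    exact sSup_image' (s := Set.Icc (0:ℝ) 1) (f := fun t : ℝ => A (x, t * d x))
  calc localMax G f x
      = sSup ((fun r => ⨍ y in ball x r, |f y|) '' Set.Ioo 0 (d x)) := step1
    _ = sSup ((fun r => A (x, r)) '' Set.Ioo 0 (d x)) := by rw [step2]
    _ = sSup ((fun r => A (x, r)) '' Set.Icc 0 (d x)) := step3
    _ = sSup ((fun t : ℝ => A (x, t * d x)) '' Set.Icc 0 1) := by rw [step4]
    _ = ‖Φ x‖ := step5
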